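/- Fix α ∈ ℝ and a > 1, and define τ_a : (1,∞) → ℝ by τ_a(r) = (α/8)·(1 − 1/r)^{1/2}·( ∫_a^r s⁻⁵·(1 − 1/s)^{−3/2} ds − 2·a^{−5/2}·(a − 1)^{−1/2} ). Then τ_a is differentiable on (1,∞) and satisfies, for every r ∈ (1,∞), the linear ODE (2/r)·(1 − 1/r)·τ_a'(r) − τ_a(r)/r³ = α/(4·r⁶). -/

import Mathlib

open MeasureTheory intervalIntegral

/-- The Schwarzschild potential `τ_a` (mass `m = 1/2`): for `a > 1`, the function
`τ_a(r) = (α/8)·(1 − 1/r)^{1/2}·(∫_a^r s⁻⁵·(1 − 1/s)^{−3/2} ds − 2·a^{−5/2}·(a − 1)^{−1/2})`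
is differentiable on `(1,∞)` and satisfies the linear ODE
`(2/r)·(1 − 1/r)·τ_a'(r) − τ_a(r)/r³ = α/(4·r⁶)` there. -/
theorem schwarzschild_potential_ode
    (α a : ℝ) (ha : 1 < a) (tau : ℝ → ℝ)
    (htau : ∀ r : ℝ, 1 < r → tau r =
      (α / 8) * Real.sqrt (1 - 1 / r) *
        ((∫ s in a..r, (s ^ 5)⁻¹ * (1 - 1 / s) ^ (-(3 : ℝ) / 2)) -
          2 * a ^ (-(5 : ℝ) / 2) * (a - 1) ^ (-(1 : ℝ) / 2))) :
    ∃ tau' : ℝ → ℝ,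
      (∀ r : ℝ, 1 < r → HasDerivAt tau (tau' r) r) ∧
      (∀ r : ℝ, 1 < r →
        (2 / r) * (1 - 1 / r) * tau' r - tau r / r ^ 3 = α / (4 * r ^ 6)) := by
  set f : ℝ → ℝ := fun s => (s ^ 5)⁻¹ * (1 - 1 / s) ^ (-(3 : ℝ) / 2) with hf
  set K : ℝ := 2 * a ^ (-(5 : ℝ) / 2) * (a - 1) ^ (-(1 : ℝ) / 2) with hK
  set F : ℝ → ℝ := fun r => ∫ s in a..r, f s with hF
  set g : ℝ → ℝ := fun r => Real.sqrt (1 - 1 / r) with hg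
  -- continuity of f on (1, ∞)
  have hf_cont : ContinuousOn f (Set.Ioi (1 : ℝ)) := by
    apply ContinuousOn.mul
    · apply ContinuousOn.inv₀ (by fun_prop)
      intro x hx
      have : (1:ℝ) < x := hx
      positivity
    · apply ContinuousOn.rpow_const
      · apply ContinuousOn.sub continuousOn_const
        apply ContinuousOn.div continuousOn_const (by fun_prop)
        intro x hx; have : (1:ℝ) < x := hx; positivity
      · intro x hx
        left
        have hx1 : (1:ℝ) < x := hx
        have : 1 / x < 1 := by
          rw [div_lt_one (by linarith)]; exact hx1
        intro h; rw [sub_eq_zero] at h; linarith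
  have key : ∀ r : ℝ, 1 < r →
      HasDerivAt tau ((α / 8) * ((1 / (2 * Real.sqrt (1 - 1 / r)) * (r ^ 2)⁻¹) * (F r - K)
        + g r * f r)) r := by
    intro r hr
    have hr0 : (0:ℝ) < r := by linarith
    have hx : (0:ℝ) < 1 - 1 / r := by
      have : 1 / r < 1 := by rw [div_lt_one hr0]; exact hr
      linarith
    -- derivative of F at r
    have hsub : Set.uIcc a r ⊆ Set.Ioi (1 : ℝ) := by
      intro x hx
      exact lt_of_lt_of_le (lt_min ha hr) hx.1
    have hFd : HasDerivAt F (f r) r := by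
      apply intervalIntegral.integral_hasDerivAt_right
      · exact (hf_cont.mono hsub).intervalIntegrable
      · exact hf_cont.stronglyMeasurableAtFilter isOpen_Ioi r hr
      · exact (hf_cont r hr).continuousAt (isOpen_Ioi.mem_nhds hr)
    -- derivative of g at r
    have hinner : HasDerivAt (fun r : ℝ => 1 - 1 / r) ((r ^ 2)⁻¹) r := by
      have := (hasDerivAt_inv (ne_of_gt hr0)).const_sub 1
      simpa using this
    have hgd : HasDerivAt g (1 / (2 * Real.sqrt (1 - 1 / r)) * (r ^ 2)⁻¹) r :=
      (Real.hasDerivAt_sqrt (ne_of_gt hx)).comp r hinner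
    -- product rule
    have hprod : HasDerivAt (fun r => (α / 8) * (g r * (F r - K)))
        ((α / 8) * ((1 / (2 * Real.sqrt (1 - 1 / r)) * (r ^ 2)⁻¹) * (F r - K) + g r * f r)) r := by
      exact ((hgd.mul (hFd.sub_const K))).const_mul (α / 8)
    apply hprod.congr_of_eventuallyEq
    filter_upwards [isOpen_Ioi.mem_nhds hr] with y hy
    rw [htau y hy]; ring
  refine ⟨fun r => (α / 8) * ((1 / (2 * Real.sqrt (1 - 1 / r)) * (r ^ 2)⁻¹) * (F r - K)
        + g r * f r), fun r hr => key r hr, ?_⟩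
  intro r hr
  have hr0 : (0:ℝ) < r := by linarith
  have hx : (0:ℝ) < 1 - 1 / r := by
    have : 1 / r < 1 := by rw [div_lt_one hr0]; exact hr
    linarith
  rw [htau r hr]
  have hFr : (∫ s in a..r, f s) = F r := rfl
  rw [hFr]
  have hsq : Real.sqrt (1 - 1 / r) ^ 2 = 1 - 1 / r := Real.sq_sqrt hx.le
  have hgf : (1 - 1/r) * (Real.sqrt (1 - 1/r) * f r) = (r ^ 5)⁻¹ := by
    show (1 - 1/r) * (Real.sqrt (1 - 1/r) * ((r ^ 5)⁻¹ * (1 - 1 / r) ^ (-(3 : ℝ) / 2))) = _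
    rw [Real.sqrt_eq_rpow]
    rw [show (1 - 1/r) * ((1 - 1/r) ^ ((1:ℝ)/2) * ((r ^ 5)⁻¹ * (1 - 1 / r) ^ (-(3 : ℝ) / 2)))
        = ((1 - 1/r) ^ (1:ℝ) * (1 - 1/r) ^ ((1:ℝ)/2) * (1 - 1 / r) ^ (-(3 : ℝ) / 2)) * (r ^ 5)⁻¹
        from by rw [Real.rpow_one]; ring]
    rw [← Real.rpow_add hx, ← Real.rpow_add hx]
    norm_num
  have hsqrt_pos : 0 < Real.sqrt (1 - 1/r) := Real.sqrt_pos.mpr hx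
  show 2 / r * (1 - 1 / r) * (α / 8 * (1 / (2 * Real.sqrt (1 - 1 / r)) * (r ^ 2)⁻¹ * (F r - K)
      + Real.sqrt (1 - 1/r) * f r)) - α / 8 * Real.sqrt (1 - 1 / r) * (F r - K) / r ^ 3
    = α / (4 * r ^ 6)
  generalize F r - K = B
  generalize hc : f r = c at hgf
  generalize hs0 : Real.sqrt (1 - 1/r) = s0 at hsq hgf hsqrt_pos ⊢
  generalize hx0 : 1 - 1/r = x at hsq hgf hx ⊢
  have hgf' : x * s0 * c * r ^ 5 = 1 := by
    rw [mul_assoc x s0 c, hgf]; field_simp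
  field_simp
  linear_combination (-4*α*B*r^3) * hsq + (8*α*s0) * hgf'
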